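/- Let 𝒞 be a nowhere dense class of finite graphs. Then there exists a function c : ℕ → ℕ such that for every r ∈ ℕ, every graph G ∈ 𝒞, and every vertex subset A ⊆ V(G) with |A| ≥ 2, the r-neighborhood complexity satisfies ν_r(G,A) ≤ |A|^{c(r)}. -/

import Mathlib

open SimpleGraph

/-- A finite simple graph: a bundled finite vertex type together with a simple graph on it. -/
structure FinGraph : Type 1 where
  V : Type
  fintypeV : Fintype V
  graph : SimpleGraph V

attribute [instance] FinGraph.fintypeV

/-- The set `S` induces a subgraph of `G` of radius at most `r`:
there is a center `c ∈ S` from which every vertex of `S` is at distance at most `r`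
inside the subgraph induced by `S`. -/
def hasRadiusLE {V : Type} (G : SimpleGraph V) (S : Set V) (r : ℕ) : Prop :=
  ∃ c : S, ∀ x : S, (G.induce S).edist c x ≤ (r : ℕ∞)

/-- `H` is a depth-`r` minor of `G`: there is a minor model of `H` in `G` with
pairwise disjoint connected branch sets of radius at most `r`. -/
def IsDepthMinor {W V : Type} (r : ℕ) (H : SimpleGraph W) (G : SimpleGraph V) : Prop :=
  ∃ I : W → Set V,
    (∀ u, hasRadiusLE G (I u) r) ∧
    (Pairwise fun u v => Disjoint (I u) (I v)) ∧
    (∀ u v, H.Adj u v → ∃ a ∈ I u, ∃ b ∈ I v, G.Adj a b)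

/-- A class of finite graphs is nowhere dense if there is `f : ℕ → ℕ` such that
`K_{f r}` is not a depth-`r` minor of any member, for every `r`. -/
def NowhereDense (C : Set FinGraph) : Prop :=
  ∃ f : ℕ → ℕ, ∀ r : ℕ, ∀ G ∈ C, ¬ IsDepthMinor r (completeGraph (Fin (f r))) G.graph

/-- `H` is (isomorphic to) a subgraph of `G`. -/
def IsSubgraphOf (H G : FinGraph) : Prop :=
  ∃ f : H.V ↪ G.V, ∀ u v, H.graph.Adj u v → G.graph.Adj (f u) (f v)

/-- A class of graphs is monotone if it is closed under taking subgraphs. -/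
def MonotoneClass (C : Set FinGraph) : Prop :=
  ∀ G ∈ C, ∀ H : FinGraph, IsSubgraphOf H G → H ∈ C

/-- The closed ball of radius `r` around `v`: `N_r[v]`. -/
def ball {V : Type} (G : SimpleGraph V) (r : ℕ) (v : V) : Set V :=
  {u | G.edist u v ≤ (r : ℕ∞)}

/-- The `r`-neighborhood complexity `ν_r(G,A)`. -/
noncomputable def nu {V : Type} (G : SimpleGraph V) (r : ℕ) (A : Set V) : ℕ :=
  {S : Set V | ∃ v : V, S = ball G r v ∩ A}.ncard

/-- The value of the `r`-distance profile of `u` at `x`: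
`dist_G(u,x)` if it is at most `r`, and `∞` otherwise. -/
noncomputable def profVal {V : Type} (G : SimpleGraph V) (r : ℕ) (u x : V) : ℕ∞ :=
  if G.edist u x ≤ (r : ℕ∞) then G.edist u x else ⊤

/-- The distance profile complexity `ν̂_r(G,A)`: the number of distinct
`r`-distance profiles `π_r[u,A] : A → {0,…,r,∞}` over `u ∈ V(G)`. -/
noncomputable def nuHat {V : Type} (G : SimpleGraph V) (r : ℕ) (A : Set V) : ℕ :=
  {f : ↥A → ℕ∞ | ∃ u : V, f = fun x : ↥A => profVal G r u ↑x}.ncard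

/-- A family `F` of subsets shatters `X` if every subset of `X` is an intersection of
`X` with a member of `F`. -/
def Shatters {U : Type} (F : Set (Set U)) (X : Set U) : Prop :=
  ∀ Y ⊆ X, ∃ S ∈ F, X ∩ S = Y

/-- The family `F` has VC-dimension at most `d`. -/
def VCDimLE {U : Type} (F : Set (Set U)) (d : ℕ) : Prop :=
  ∀ X : Set U, Shatters F X → X.ncard ≤ d

/-- `WReach_r[G,L,v]`: the set of vertices weakly `r`-reachable from `v` with respect to
the linear order `L`: vertices `u` joined to `v` by a path of length at most `r` on which
`u` is the `L`-least vertex. -/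
def WReach {V : Type} (G : SimpleGraph V) (L : LinearOrder V) (r : ℕ) (v : V) : Set V :=
  {u | ∃ p : G.Walk u v, p.IsPath ∧ p.length ≤ r ∧ ∀ x ∈ p.support, L.le u x}

/-- `B` is `r`-independent in `G`: distinct vertices of `B` are at distance more than `r`. -/
def RIndep {V : Type} (G : SimpleGraph V) (r : ℕ) (B : Set V) : Prop :=
  ∀ u ∈ B, ∀ v ∈ B, u ≠ v → (r : ℕ∞) < G.edist u v

/-- The length of a shortest `A`-avoiding path from `u` to `v`
(all vertices except possibly `v` lie outside `A`); `∞` if there is none. -/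
noncomputable def avoidDist {V : Type} (G : SimpleGraph V) (A : Set V) (u v : V) : ℕ∞ :=
  sInf {n : ℕ∞ | ∃ p : G.Walk u v, p.IsPath ∧ (∀ x ∈ p.support, x ≠ v → x ∉ A) ∧ (p.length : ℕ∞) = n}

/-- The value of the `r`-projection profile `ρ_r[u,A]` at `v`. -/
noncomputable def projProfVal {V : Type} (G : SimpleGraph V) (r : ℕ) (A : Set V) (u v : V) : ℕ∞ :=
  if avoidDist G A u v ≤ (r : ℕ∞) then avoidDist G A u v else ⊤

/-- The `r`-projection `M_r(u,A)` of `u` on `A`. -/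
def Mproj {V : Type} (G : SimpleGraph V) (r : ℕ) (A : Set V) (u : V) : Set V :=
  {v ∈ A | avoidDist G A u v ≤ (r : ℕ∞)}

/-- The projection profile complexity `μ̂_r(G,A)`: the number of distinct
`r`-projection profiles `ρ_r[u,A]` over `u ∈ V(G) ∖ A`. -/
noncomputable def muHat {V : Type} (G : SimpleGraph V) (r : ℕ) (A : Set V) : ℕ :=
  {f : ↥A → ℕ∞ | ∃ u : V, u ∉ A ∧ f = fun v : ↥A => projProfVal G r A u ↑v}.ncard

/-- `D` is a `(Z,r)`-dominator in `G`: every vertex of `Z` is at distance at most `r`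
from some vertex of `D`. -/
def IsDominator {V : Type} (G : SimpleGraph V) (r : ℕ) (Z D : Set V) : Prop :=
  ∀ z ∈ Z, ∃ d ∈ D, G.edist z d ≤ (r : ℕ∞)

/-- `D` is a minimum-size `(Z,r)`-dominator in `G`. -/
def IsMinDominator {V : Type} (G : SimpleGraph V) (r : ℕ) (Z D : Set V) : Prop :=
  IsDominator G r Z D ∧ ∀ D' : Set V, IsDominator G r Z D' → D.ncard ≤ D'.ncard

/-- `Z` is an `r`-domination core of `G`: every minimum-size `(Z,r)`-dominator
is an `r`-dominating set of `G`. -/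
def IsDomCore {V : Type} (G : SimpleGraph V) (r : ℕ) (Z : Set V) : Prop :=
  ∀ D : Set V, IsMinDominator G r Z D → IsDominator G r Set.univ D

/-- `ds_r(G,Z)`: the minimum size of a `(Z,r)`-dominator in `G`. -/
noncomputable def dsr {V : Type} (G : SimpleGraph V) (r : ℕ) (Z : Set V) : ℕ :=
  sInf {n : ℕ | ∃ D : Set V, IsDominator G r Z D ∧ D.ncard = n}

namespace NCaux

variable {V : Type}

lemma enat_le_cancel {a b : ℕ∞} (ha : a ≠ ⊤) (h : a + 1 ≤ b + 1) : a ≤ b := by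
  rcases eq_or_ne b ⊤ with rfl | hb
  · exact le_top
  · exact (ENat.lt_add_one_iff hb).1 ((ENat.add_one_le_iff ha).1 h)

lemma enat_lt_cancel_left {c x y : ℕ∞} (h : c + x < c + y) : x < y := by
  by_contra hxy
  exact absurd (add_le_add_right (not_lt.1 hxy) c) (not_le.2 h)

lemma mIdx_filter_nonempty (G : SimpleGraph V) {t : ℕ} (ht : 0 < t) (x : Fin t → V) (u : V) :
    ((Finset.univ : Finset (Fin t)).filter
      (fun k => ∀ j, G.edist u (x k) ≤ G.edist u (x j))).Nonempty := by
  have hne : Nonempty (Fin t) := ⟨⟨0, ht⟩⟩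
  obtain ⟨k, -, hk⟩ := Finset.exists_min_image (Finset.univ : Finset (Fin t))
    (fun k => G.edist u (x k)) ⟨Classical.arbitrary _, Finset.mem_univ _⟩
  exact ⟨k, Finset.mem_filter.2 ⟨Finset.mem_univ _, fun j => hk j (Finset.mem_univ _)⟩⟩

/-- The index of the (least) nearest center. -/
noncomputable def mIdx (G : SimpleGraph V) {t : ℕ} (ht : 0 < t) (x : Fin t → V) (u : V) :
    Fin t :=
  ((Finset.univ : Finset (Fin t)).filter
    (fun k => ∀ j, G.edist u (x k) ≤ G.edist u (x j))).min' (mIdx_filter_nonempty G ht x u)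

lemma mIdx_min (G : SimpleGraph V) {t : ℕ} (ht : 0 < t) (x : Fin t → V) (u : V) (j : Fin t) :
    G.edist u (x (mIdx G ht x u)) ≤ G.edist u (x j) := by
  have h := Finset.min'_mem ((Finset.univ : Finset (Fin t)).filter
    (fun k => ∀ j, G.edist u (x k) ≤ G.edist u (x j))) (mIdx_filter_nonempty G ht x u)
  exact (Finset.mem_filter.1 h).2 j

lemma mIdx_eq (G : SimpleGraph V) {t : ℕ} (ht : 0 < t) (x : Fin t → V) (u : V) (k : Fin t)
    (hmin : ∀ j, G.edist u (x k) ≤ G.edist u (x j))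
    (hstrict : ∀ j, j < k → G.edist u (x k) < G.edist u (x j)) :
    mIdx G ht x u = k := by
  have hk : k ∈ (Finset.univ : Finset (Fin t)).filter
      (fun k => ∀ j, G.edist u (x k) ≤ G.edist u (x j)) :=
    Finset.mem_filter.2 ⟨Finset.mem_univ _, hmin⟩
  have hle : mIdx G ht x u ≤ k := Finset.min'_le _ _ hk
  rcases lt_or_eq_of_le hle with hlt | he
  · exact absurd (mIdx_min G ht x u k) (not_le.2 (hstrict _ hlt))
  · exact he

/-- The Voronoi cell of center `x k`, restricted to radius `r`. -/
def cell (G : SimpleGraph V) (r : ℕ) {t : ℕ} (ht : 0 < t) (x : Fin t → V) (k : Fin t) :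
    Set V :=
  {u | mIdx G ht x u = k ∧ G.edist u (x k) ≤ (r : ℕ∞)}

lemma mIdx_self (G : SimpleGraph V) (r : ℕ) {t : ℕ} (ht : 0 < t) {x : Fin t → V}
    (hinj : Function.Injective x) (k : Fin t) : mIdx G ht x (x k) = k := by
  apply mIdx_eq
  · intro j; simp [SimpleGraph.edist_self]
  · intro j hj
    simp only [SimpleGraph.edist_self]
    exact SimpleGraph.edist_pos_of_ne (fun h => (ne_of_lt hj) (hinj h).symm)

lemma x_mem_cell (G : SimpleGraph V) (r : ℕ) {t : ℕ} (ht : 0 < t) {x : Fin t → V}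
    (hinj : Function.Injective x) (k : Fin t) : x k ∈ cell G r ht x k :=
  ⟨mIdx_self G r ht hinj k, by simp⟩

lemma cells_disjoint (G : SimpleGraph V) (r : ℕ) {t : ℕ} (ht : 0 < t) (x : Fin t → V) :
    Pairwise fun i j => Disjoint (cell G r ht x i) (cell G r ht x j) := by
  intro i j hij
  rw [Set.disjoint_left]
  rintro u ⟨h1, -⟩ ⟨h2, -⟩
  exact hij (h1 ▸ h2 ▸ rfl)

lemma cell_descent (G : SimpleGraph V) (r : ℕ) {t : ℕ} (ht : 0 < t) (x : Fin t → V)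
    (k : Fin t) {u : V} (hu : u ∈ cell G r ht x k) (hne : u ≠ x k) :
    ∃ w, G.Adj u w ∧ w ∈ cell G r ht x k ∧ G.edist w (x k) + 1 = G.edist u (x k) := by
  have hur : G.edist u (x k) ≤ (r : ℕ∞) := hu.2
  have hnt : G.edist u (x k) ≠ ⊤ := ne_top_of_le_ne_top (ENat.coe_ne_top r) hur
  obtain ⟨p, hp⟩ := (SimpleGraph.reachable_of_edist_ne_top hnt).exists_walk_length_eq_edist
  cases p with
  | nil => exact absurd rfl hne
  | @cons _ w _ hadj q =>
    have hq : G.edist w (x k) ≤ (q.length : ℕ∞) := SimpleGraph.edist_le q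
    have hlen : G.edist u (x k) = (q.length : ℕ∞) + 1 := by
      rw [← hp, SimpleGraph.Walk.length_cons]; push_cast; ring
    have huw : G.edist u w = 1 := SimpleGraph.edist_eq_one_iff_adj.2 hadj
    -- equality : edist w (x k) + 1 = edist u (x k)
    have htri : G.edist u (x k) ≤ G.edist w (x k) + 1 := by
      calc G.edist u (x k) ≤ G.edist u w + G.edist w (x k) := SimpleGraph.edist_triangle
        _ = G.edist w (x k) + 1 := by rw [huw]; ring
    have hkey : G.edist w (x k) + 1 = G.edist u (x k) := by
      apply le_antisymm
      · rw [hlen]; exact add_le_add_left hq 1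
      · exact htri
    have hwnt : G.edist w (x k) ≠ ⊤ := by
      intro h; rw [h] at hkey; simp at hkey; rw [← hkey] at hnt; exact hnt rfl
    have hwr : G.edist w (x k) ≤ (r : ℕ∞) := by
      calc G.edist w (x k) ≤ G.edist w (x k) + 1 := le_self_add
        _ = G.edist u (x k) := hkey
        _ ≤ (r : ℕ∞) := hur
    have hmin : ∀ j, G.edist w (x k) ≤ G.edist w (x j) := by
      intro j
      have h1 : G.edist u (x k) ≤ G.edist u (x j) := by
        have := mIdx_min G ht x u j; rwa [hu.1] at this
      have h2 : G.edist u (x j) ≤ G.edist w (x j) + 1 := by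
        calc G.edist u (x j) ≤ G.edist u w + G.edist w (x j) := SimpleGraph.edist_triangle
          _ = G.edist w (x j) + 1 := by rw [huw]; ring
      exact enat_le_cancel hwnt (by rw [hkey]; exact le_trans h1 h2)
    have hstrict : ∀ j, j < k → G.edist w (x k) < G.edist w (x j) := by
      intro j hj
      have hjnot : j ∉ (Finset.univ : Finset (Fin t)).filter
          (fun k' => ∀ j', G.edist u (x k') ≤ G.edist u (x j')) := by
        intro hmem
        have := Finset.min'_le _ _ hmem
        rw [show ((Finset.univ : Finset (Fin t)).filter
          (fun k' => ∀ j', G.edist u (x k') ≤ G.edist u (x j'))).min'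
            (mIdx_filter_nonempty G ht x u) = mIdx G ht x u from rfl, hu.1] at this
        exact absurd this (not_le.2 hj)
      have hex : ∃ j', G.edist u (x j') < G.edist u (x j) := by
        by_contra hc
        push_neg at hc
        exact hjnot (Finset.mem_filter.2 ⟨Finset.mem_univ _, fun j' => hc j'⟩)
      obtain ⟨j', hj'⟩ := hex
      have h1 : G.edist u (x k) < G.edist u (x j) := by
        have := mIdx_min G ht x u j'; rw [hu.1] at this
        exact lt_of_le_of_lt this hj'
      -- edist u (x k) + 1 ≤ edist u (x j) ≤ edist w (x j) + 1
      have h2 : G.edist u (x k) + 1 ≤ G.edist u (x j) := (ENat.add_one_le_iff hnt).2 h1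
      have h3 : G.edist u (x j) ≤ G.edist w (x j) + 1 := by
        calc G.edist u (x j) ≤ G.edist u w + G.edist w (x j) := SimpleGraph.edist_triangle
          _ = G.edist w (x j) + 1 := by rw [huw]; ring
      have h4 : (G.edist w (x k) + 1) + 1 ≤ G.edist w (x j) + 1 := by
        rw [hkey]; exact le_trans h2 h3
      have h5 : G.edist w (x k) + 1 ≤ G.edist w (x j) :=
        enat_le_cancel (by rw [hkey]; exact hnt) h4
      exact (ENat.add_one_le_iff hwnt).1 h5
    exact ⟨w, hadj, ⟨mIdx_eq G ht x w k hmin hstrict, hwr⟩, hkey⟩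

lemma cell_edist_le (G : SimpleGraph V) (r : ℕ) {t : ℕ} (ht : 0 < t) {x : Fin t → V}
    (hinj : Function.Injective x) (k : Fin t) :
    ∀ (n : ℕ) (u : V) (hu : u ∈ cell G r ht x k), G.edist u (x k) = (n : ℕ∞) →
      (G.induce (cell G r ht x k)).edist ⟨u, hu⟩ ⟨x k, x_mem_cell G r ht hinj k⟩ ≤ (n : ℕ∞) := by
  intro n
  induction n with
  | zero =>
    intro u hu hn
    have h0 : G.edist u (x k) = 0 := by exact_mod_cast hn
    have : u = x k := SimpleGraph.edist_eq_zero_iff.1 h0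
    subst this
    simp [SimpleGraph.edist_self]
  | succ n ih =>
    intro u hu hn
    have hne : u ≠ x k := by
      intro h; subst h; rw [SimpleGraph.edist_self] at hn
      have : (0 : ℕ) = n + 1 := by exact_mod_cast hn
      omega
    obtain ⟨w, hadj, hw, hkey⟩ := cell_descent G r ht x k hu hne
    have hwn : G.edist w (x k) = (n : ℕ∞) := by
      have h1 : G.edist w (x k) + 1 = (n : ℕ∞) + 1 := by
        rw [hkey, hn]; push_cast; ring
      have hwnt : G.edist w (x k) ≠ ⊤ := by
        intro h; rw [h] at h1
        have h2 : ((n : ℕ∞) + 1) = ((n + 1 : ℕ) : ℕ∞) := by push_cast; ring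
        rw [h2] at h1
        exact (ENat.coe_ne_top (n + 1)) h1.symm
      have := enat_le_cancel hwnt (le_of_eq h1)
      have h2 := enat_le_cancel (ENat.coe_ne_top n) (le_of_eq h1.symm)
      exact le_antisymm this h2
    have hIH := ih w hw hwn
    have hadj' : (G.induce (cell G r ht x k)).Adj ⟨u, hu⟩ ⟨w, hw⟩ := hadj
    have h1 : (G.induce (cell G r ht x k)).edist ⟨u, hu⟩ ⟨w, hw⟩ ≤ 1 :=
      le_of_eq (SimpleGraph.edist_eq_one_iff_adj.2 hadj')
    calc (G.induce (cell G r ht x k)).edist ⟨u, hu⟩ ⟨x k, x_mem_cell G r ht hinj k⟩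
        ≤ (G.induce (cell G r ht x k)).edist ⟨u, hu⟩ ⟨w, hw⟩
          + (G.induce (cell G r ht x k)).edist ⟨w, hw⟩ ⟨x k, x_mem_cell G r ht hinj k⟩ :=
          SimpleGraph.edist_triangle
      _ ≤ 1 + (n : ℕ∞) := add_le_add h1 hIH
      _ = ((n + 1 : ℕ) : ℕ∞) := by push_cast; ring

lemma cell_hasRadius (G : SimpleGraph V) (r : ℕ) {t : ℕ} (ht : 0 < t) {x : Fin t → V}
    (hinj : Function.Injective x) (k : Fin t) :
    hasRadiusLE G (cell G r ht x k) r := by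
  refine ⟨⟨x k, x_mem_cell G r ht hinj k⟩, ?_⟩
  rintro ⟨u, hu⟩
  rw [SimpleGraph.edist_comm]
  have hur : G.edist u (x k) ≤ (r : ℕ∞) := hu.2
  have hnt : G.edist u (x k) ≠ ⊤ := ne_top_of_le_ne_top (ENat.coe_ne_top r) hur
  lift G.edist u (x k) to ℕ using hnt with n hn
  have hnr : (n : ℕ∞) ≤ (r : ℕ∞) := hur
  exact le_trans (cell_edist_le G r ht hinj k n u hu hn.symm) hnr

lemma walk_cross (G : SimpleGraph V) {S T : Set V} :
    ∀ {a b : V} (q : G.Walk a b), a ∈ S → b ∉ S → (∀ w ∈ q.support, w ∈ S ∪ T) →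
      ∃ a' ∈ S, ∃ b' ∈ T, G.Adj a' b' := by
  intro a b q
  induction q with
  | nil => intro ha hb _; exact absurd ha hb
  | @cons a c b hadj q ih =>
    intro ha hb hsupp
    by_cases hc : c ∈ S
    · exact ih hc hb (fun w hw => hsupp w (by simp [SimpleGraph.Walk.support_cons, hw]))
    · have hcT : c ∈ S ∪ T := hsupp c (by simp [SimpleGraph.Walk.support_cons,
        SimpleGraph.Walk.start_mem_support])
      exact ⟨a, ha, c, hcT.resolve_left hc, hadj⟩

lemma support_in_cells (G : SimpleGraph V) (r : ℕ) {t : ℕ} (ht : 0 < t) {x : Fin t → V}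
    (i j : Fin t) (v : V)
    (hv : ∀ k, G.edist (x k) v ≤ (r : ℕ∞) ↔ (k = i ∨ k = j))
    (j' : Fin t) (hj' : j' = i ∨ j' = j) (p : G.Walk v (x j'))
    (hlen : (p.length : ℕ∞) = G.edist v (x j')) :
    ∀ w ∈ p.support, w ∈ cell G r ht x i ∪ cell G r ht x j := by
  classical
  intro w hw
  set q1 := p.takeUntil w hw with hq1
  set q2 := p.dropUntil w hw with hq2
  have hsum : q1.length + q2.length = p.length := by
    rw [← SimpleGraph.Walk.length_append, SimpleGraph.Walk.take_spec]
  have hd1 : G.edist v w ≤ (q1.length : ℕ∞) := SimpleGraph.edist_le q1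
  have hd2 : G.edist w (x j') ≤ (q2.length : ℕ∞) := SimpleGraph.edist_le q2
  have hvr : G.edist v (x j') ≤ (r : ℕ∞) := by
    rw [SimpleGraph.edist_comm]; exact (hv j').2 hj'
  have key2 : (q1.length : ℕ∞) + G.edist w (x j') ≤ (r : ℕ∞) := by
    calc (q1.length : ℕ∞) + G.edist w (x j') ≤ (q1.length : ℕ∞) + (q2.length : ℕ∞) :=
          add_le_add_right hd2 _
      _ = (p.length : ℕ∞) := by rw [← hsum]; push_cast; ring
      _ = G.edist v (x j') := hlen
      _ ≤ (r : ℕ∞) := hvr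
  have hwj' : G.edist w (x j') ≤ (r : ℕ∞) := le_trans (le_add_self) key2
  have key3 : ∀ k : Fin t, ¬(k = i ∨ k = j) → G.edist w (x j') < G.edist w (x k) := by
    intro k hk
    have hkr : (r : ℕ∞) < G.edist v (x k) := by
      rw [SimpleGraph.edist_comm]
      exact not_le.1 (fun hle => hk ((hv k).1 hle))
    have htri : G.edist v (x k) ≤ (q1.length : ℕ∞) + G.edist w (x k) := by
      calc G.edist v (x k) ≤ G.edist v w + G.edist w (x k) := SimpleGraph.edist_triangle
        _ ≤ (q1.length : ℕ∞) + G.edist w (x k) := add_le_add_left hd1 _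
    have : (q1.length : ℕ∞) + G.edist w (x j') < (q1.length : ℕ∞) + G.edist w (x k) :=
      lt_of_le_of_lt key2 (lt_of_lt_of_le hkr htri)
    exact enat_lt_cancel_left this
  set m := mIdx G ht x w with hm
  have hmem : m = i ∨ m = j := by
    by_contra hc
    have h1 := key3 m hc
    have h2 := mIdx_min G ht x w j'
    rw [← hm] at h2
    exact absurd h2 (not_le.2 h1)
  have hwm : G.edist w (x m) ≤ (r : ℕ∞) := by
    have := mIdx_min G ht x w j'
    rw [← hm] at this
    exact le_trans this hwj'
  rcases hmem with h | h
  · exact Or.inl ⟨by rw [← hm]; exact h, by rw [← h]; exact hwm⟩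
  · exact Or.inr ⟨by rw [← hm]; exact h, by rw [← h]; exact hwm⟩

lemma cell_adj (G : SimpleGraph V) (r : ℕ) {t : ℕ} (ht : 0 < t) {x : Fin t → V}
    (hinj : Function.Injective x) (i j : Fin t) (hij : i ≠ j) (v : V)
    (hv : ∀ k, G.edist (x k) v ≤ (r : ℕ∞) ↔ (k = i ∨ k = j)) :
    ∃ a ∈ cell G r ht x i, ∃ b ∈ cell G r ht x j, G.Adj a b := by
  have hvi : G.edist v (x i) ≤ (r : ℕ∞) := by
    rw [SimpleGraph.edist_comm]; exact (hv i).2 (Or.inl rfl)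
  have hvj : G.edist v (x j) ≤ (r : ℕ∞) := by
    rw [SimpleGraph.edist_comm]; exact (hv j).2 (Or.inr rfl)
  obtain ⟨pi, hpi⟩ := (SimpleGraph.reachable_of_edist_ne_top
    (ne_top_of_le_ne_top (ENat.coe_ne_top r) hvi)).exists_walk_length_eq_edist
  obtain ⟨pj, hpj⟩ := (SimpleGraph.reachable_of_edist_ne_top
    (ne_top_of_le_ne_top (ENat.coe_ne_top r) hvj)).exists_walk_length_eq_edist
  have hsi := support_in_cells G r ht i j v hv i (Or.inl rfl) pi hpi
  have hsj := support_in_cells G r ht i j v hv j (Or.inr rfl) pj hpj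
  set q : G.Walk (x i) (x j) := pi.reverse.append pj with hq
  have hsupp : ∀ w ∈ q.support, w ∈ cell G r ht x i ∪ cell G r ht x j := by
    intro w hw
    rw [hq, SimpleGraph.Walk.mem_support_append_iff] at hw
    rcases hw with hw | hw
    · exact hsi w (by rwa [SimpleGraph.Walk.support_reverse, List.mem_reverse] at hw)
    · exact hsj w hw
  have hxi : x i ∈ cell G r ht x i := x_mem_cell G r ht hinj i
  have hxj : x j ∉ cell G r ht x i := by
    intro hmem
    have h1 : mIdx G ht x (x j) = i := hmem.1
    rw [mIdx_self G r ht hinj j] at h1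
    exact hij h1.symm
  obtain ⟨a, ha, b, hb, hab⟩ := walk_cross G q hxi hxj hsupp
  exact ⟨a, ha, b, hb, hab⟩

theorem depthMinor_of_shattered (G : SimpleGraph V) (r t : ℕ) (ht : 0 < t)
    (x : Fin t → V) (hinj : Function.Injective x)
    (hwit : ∀ i j : Fin t, i ≠ j →
      ∃ v, ∀ k, G.edist (x k) v ≤ (r : ℕ∞) ↔ (k = i ∨ k = j)) :
    IsDepthMinor r (completeGraph (Fin t)) G := by
  refine ⟨cell G r ht x, fun k => cell_hasRadius G r ht hinj k,
    cells_disjoint G r ht x, ?_⟩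
  intro i j hadj
  have hij : i ≠ j := by simpa [completeGraph] using hadj
  obtain ⟨v, hv⟩ := hwit i j hij
  exact cell_adj G r ht hinj i j hij v hv

lemma sum_choose_le (n : ℕ) : ∀ d : ℕ, ∑ i ∈ Finset.range (d + 1), n.choose i ≤ (n + 1) ^ d := by
  intro d
  induction d with
  | zero => simp
  | succ d ih =>
    rw [Finset.sum_range_succ]
    have h1 : n.choose (d + 1) ≤ n.choose d * n := by
      have h2 : n.choose (d + 1) ≤ n.choose (d + 1) * (d + 1) :=
        Nat.le_mul_of_pos_right _ (by omega)
      rw [Nat.choose_succ_right_eq] at h2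
      exact le_trans h2 (Nat.mul_le_mul_left _ (Nat.sub_le n d))
    have h3 : n.choose d ≤ (n + 1) ^ d :=
      le_trans (Finset.single_le_sum (f := fun i => n.choose i)
        (fun i _ => Nat.zero_le _) (Finset.self_mem_range_succ d)) ih
    calc ∑ i ∈ Finset.range (d + 1), n.choose i + n.choose (d + 1)
        ≤ (n + 1) ^ d + (n + 1) ^ d * n :=
          Nat.add_le_add ih (le_trans h1 (Nat.mul_le_mul_right n h3))
      _ = (n + 1) ^ (d + 1) := by ring

lemma depthMinor_zero {W : Type} (G : SimpleGraph W) (r : ℕ) :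
    IsDepthMinor r (completeGraph (Fin 0)) G := by
  refine ⟨fun k => Fin.elim0 k, fun k => Fin.elim0 k, ?_, fun u v _ => Fin.elim0 u⟩
  intro a b hab
  exact Fin.elim0 a

end NCaux

/-- Nowhere dense classes have polynomial neighborhood complexity. -/
theorem neighborhood_complexity_poly_of_nowhereDense
    (C : Set FinGraph) (hC : NowhereDense C) :
    ∃ c : ℕ → ℕ, ∀ (r : ℕ), ∀ G ∈ C, ∀ A : Set G.V, 2 ≤ A.ncard →
      nu G.graph r A ≤ A.ncard ^ c r := by
  classical
  obtain ⟨f, hf⟩ := hC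
  refine ⟨fun r => 2 * f r, ?_⟩
  intro r G hG A hA
  set t := f r with htdef
  have ht : 0 < t := by
    rcases Nat.eq_zero_or_pos t with h0 | h
    · exfalso
      apply hf r G hG
      rw [← htdef, h0]
      exact NCaux.depthMinor_zero G.graph r
    · exact h
  set g : G.V → Finset G.V := fun v => (Set.toFinite (ball G.graph r v ∩ A)).toFinset with hg
  set 𝒜 : Finset (Finset G.V) := Finset.univ.image g with h𝒜
  -- `nu` equals the cardinality of `𝒜`
  have hnu : nu G.graph r A = 𝒜.card := by
    have h1 : {S : Set G.V | ∃ v : G.V, S = ball G.graph r v ∩ A}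
        = Set.range (fun v => ball G.graph r v ∩ A) := by
      ext S
      simp only [Set.mem_setOf_eq, Set.mem_range]
      exact ⟨fun ⟨v, hv⟩ => ⟨v, hv.symm⟩, fun ⟨v, hv⟩ => ⟨v, hv.symm⟩⟩
    have h2 : (𝒜.image (fun s : Finset G.V => (s : Set G.V)) : Finset (Set G.V))
        = Finset.univ.image (fun v => ball G.graph r v ∩ A) := by
      rw [h𝒜, Finset.image_image]
      apply Finset.image_congr
      intro v _
      simp only [Function.comp_apply, hg, Set.Finite.coe_toFinset]
    have h3 : Set.range (fun v => ball G.graph r v ∩ A)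
        = ↑(𝒜.image (fun s : Finset G.V => (s : Set G.V))) := by
      rw [h2, Finset.coe_image, Finset.coe_univ, Set.image_univ]
    rw [nu, h1, h3, Set.ncard_coe_finset,
      Finset.card_image_of_injective _ Finset.coe_injective]
  -- members of `𝒜` are subsets of `A` (as finsets)
  set Af : Finset G.V := A.toFinite.toFinset with hAf
  have hmemA : ∀ u ∈ 𝒜, u ⊆ Af := by
    intro u hu
    obtain ⟨v, -, rfl⟩ := Finset.mem_image.1 hu
    intro a ha
    rw [Set.Finite.mem_toFinset] at ha ⊢
    exact ha.2
  -- no set of size `t` is shattered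
  have hshat : ∀ s : Finset G.V, 𝒜.Shatters s → s.card < t := by
    intro s hs
    by_contra hc
    push_neg at hc
    obtain ⟨s', hs's, hs'card⟩ := Finset.exists_subset_card_eq hc
    have hsh : 𝒜.Shatters s' := hs.mono_right hs's
    have hsubA : ∀ a ∈ s', a ∈ A := by
      obtain ⟨u, hu, hsu⟩ := hsh.exists_superset
      intro a ha
      have := hmemA u hu (hsu ha)
      rwa [Set.Finite.mem_toFinset] at this
    set e : Fin t ≃ ↥s' := (finCongr hs'card.symm).trans s'.equivFin.symm with he
    set x : Fin t → G.V := fun k => ((e k : ↥s') : G.V) with hx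
    have hxmem : ∀ k, x k ∈ s' := fun k => (e k).2
    have hxinj : Function.Injective x :=
      Subtype.val_injective.comp e.injective
    have hwit : ∀ i j : Fin t, i ≠ j →
        ∃ v, ∀ k, G.graph.edist (x k) v ≤ (r : ℕ∞) ↔ (k = i ∨ k = j) := by
      intro i j hij
      have hY : ({x i, x j} : Finset G.V) ⊆ s' := by
        intro a ha
        rcases Finset.mem_insert.1 ha with h | h
        · exact h ▸ hxmem i
        · exact (Finset.mem_singleton.1 h) ▸ hxmem j
      obtain ⟨u, hu𝒜, hinter⟩ := hsh hY
      obtain ⟨v, -, rfl⟩ := Finset.mem_image.1 hu𝒜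
      refine ⟨v, fun k => ⟨fun hk => ?_, fun hk => ?_⟩⟩
      · have hmem : x k ∈ s' ∩ g v := by
          refine Finset.mem_inter.2 ⟨hxmem k, ?_⟩
          rw [hg, Set.Finite.mem_toFinset]
          exact ⟨hk, hsubA _ (hxmem k)⟩
        rw [hinter] at hmem
        rcases Finset.mem_insert.1 hmem with h | h
        · exact Or.inl (hxinj h)
        · exact Or.inr (hxinj (Finset.mem_singleton.1 h))
      · have hmem : x k ∈ ({x i, x j} : Finset G.V) := by
          rcases hk with h | h
          · exact h ▸ Finset.mem_insert_self _ _
          · exact h ▸ Finset.mem_insert_of_mem (Finset.mem_singleton_self _)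
        rw [← hinter] at hmem
        have := (Finset.mem_inter.1 hmem).2
        rw [hg, Set.Finite.mem_toFinset] at this
        exact this.1
    exact hf r G hG
      (NCaux.depthMinor_of_shattered G.graph r t ht x hxinj hwit)
  -- counting
  have hsub : 𝒜.shatterer ⊆ (Finset.range t).biUnion (fun i => Finset.powersetCard i Af) := by
    intro s hsmem
    have hs := Finset.mem_shatterer.1 hsmem
    have hcard : s.card < t := hshat s hs
    have hsA : s ⊆ Af := by
      obtain ⟨u, hu, hsu⟩ := hs.exists_superset
      exact fun a ha => hmemA u hu (hsu ha)
    exact Finset.mem_biUnion.2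
      ⟨s.card, Finset.mem_range.2 hcard, Finset.mem_powersetCard.2 ⟨hsA, rfl⟩⟩
  set n := A.ncard with hn
  have hnAf : Af.card = n := by
    rw [hn, Set.ncard_eq_toFinset_card A A.toFinite]
  have hcount : 𝒜.card ≤ ∑ i ∈ Finset.range t, n.choose i := by
    calc 𝒜.card ≤ 𝒜.shatterer.card := Finset.card_le_card_shatterer 𝒜
      _ ≤ ((Finset.range t).biUnion fun i => Finset.powersetCard i Af).card :=
          Finset.card_le_card hsub
      _ ≤ ∑ i ∈ Finset.range t, (Finset.powersetCard i Af).card :=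
          Finset.card_biUnion_le
      _ = ∑ i ∈ Finset.range t, n.choose i := by
          simp [Finset.card_powersetCard, hnAf]
  have htt : t = (t - 1) + 1 := by omega
  have hfinal : ∑ i ∈ Finset.range t, n.choose i ≤ n ^ (2 * t) := by
    calc ∑ i ∈ Finset.range t, n.choose i
        = ∑ i ∈ Finset.range ((t - 1) + 1), n.choose i := by rw [← htt]
      _ ≤ (n + 1) ^ (t - 1) := NCaux.sum_choose_le n (t - 1)
      _ ≤ (n * n) ^ (t - 1) := Nat.pow_le_pow_left (by nlinarith) _
      _ = n ^ (2 * (t - 1)) := by rw [two_mul, pow_add, mul_pow]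
      _ ≤ n ^ (2 * t) := Nat.pow_le_pow_right (by omega) (by omega)
  rw [hnu]
  exact le_trans hcount hfinal
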